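/- Fix an integer m ≥ 3 and let X ∼ Poisson(m). Define a_i := P(X = m−i) − P(X = m+i) for i ∈ {1,...,m}. Then the sequence {a_i} changes sign at most once: there exists k such that a_i > 0 for i ≤ k and a_i ≤ 0 for i > k. -/

import Mathlib

open ProbabilityTheory
open scoped NNReal

/-- While `(i-1)*i ≤ m`, the ratio `(m+i)!/((m-i)! m^(2i))` exceeds 1. -/
private lemma natQ (m : ℕ) (hm : 1 ≤ m) :
    ∀ i, 1 ≤ i → (i - 1) * i ≤ m →
      (m - i).factorial * m ^ (2 * i) < (m + i).factorial := by
  intro i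
  induction i with
  | zero => omega
  | succ j ih =>
    intro _ hcond
    rcases Nat.eq_zero_or_pos j with hj0 | hj1
    · subst hj0
      have h2 : (m + 1).factorial = (m + 1) * m * (m - 1).factorial := by
        have hmf : m.factorial = m * (m - 1).factorial := by
          conv_lhs => rw [show m = (m - 1) + 1 by omega]
          rw [Nat.factorial_succ]
          congr 1 <;> omega
        rw [Nat.factorial_succ, hmf]; ring
      have hfacpos : 0 < (m - 1).factorial := Nat.factorial_pos _
      have hlt : m ^ (2 * (0 + 1)) < (m + 1) * m := by
        have : m ^ (2 * (0 + 1)) = m * m := by ring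
        rw [this]
        exact Nat.mul_lt_mul_of_lt_of_le (by omega) (le_refl m) (by omega)
      calc (m - (0 + 1)).factorial * m ^ (2 * (0 + 1))
          < (m - 1).factorial * ((m + 1) * m) := by
            exact mul_lt_mul_of_pos_left hlt hfacpos
        _ = (m + 1) * m * (m - 1).factorial := by ring
        _ = (m + (0 + 1)).factorial := by rw [h2]
    · -- j ≥ 1, hcond gives j * (j+1) ≤ m
      have hcond' : j * (j + 1) ≤ m := by
        have h1 : (j + 1 - 1) * (j + 1) = j * (j + 1) := by
          simp
        omega
      have hjm : j < m := by nlinarith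
      have hprev : (j - 1) * j ≤ m := by
        have : (j - 1) * j ≤ j * (j + 1) := Nat.mul_le_mul (by omega) (by omega)
        omega
      have ihj : (m - j).factorial * m ^ (2 * j) < (m + j).factorial := ih hj1 hprev
      have hfacsub : (m - j).factorial = (m - j) * (m - (j + 1)).factorial := by
        rw [show m - j = (m - (j + 1)) + 1 by omega, Nat.factorial_succ]
      have hfacadd : (m + (j + 1)).factorial = (m + j + 1) * (m + j).factorial := by
        rw [show m + (j + 1) = (m + j) + 1 by ring, Nat.factorial_succ]
      have hratio : m * m ≤ (m + j + 1) * (m - j) := by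
        zify [le_of_lt hjm]
        nlinarith
      calc (m - (j + 1)).factorial * m ^ (2 * (j + 1))
          = (m - (j + 1)).factorial * m ^ (2 * j) * (m * m) := by ring
        _ ≤ (m - (j + 1)).factorial * m ^ (2 * j) * ((m + j + 1) * (m - j)) :=
            Nat.mul_le_mul_left _ hratio
        _ = (m + j + 1) * ((m - j) * (m - (j + 1)).factorial * m ^ (2 * j)) := by ring
        _ = (m + j + 1) * ((m - j).factorial * m ^ (2 * j)) := by rw [hfacsub]
        _ < (m + j + 1) * (m + j).factorial := by
            exact mul_lt_mul_of_pos_left ihj (by omega)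
        _ = (m + (j + 1)).factorial := hfacadd.symm

/-- Downward closure: if `a_i ≤ 0` (in the nat form) then `a_{i+1} ≤ 0`. -/
private lemma natStep (m i : ℕ) (hm : 3 ≤ m) (hi1 : 1 ≤ i) (him : i + 1 ≤ m)
    (h : (m + i).factorial * m ^ (m - i) ≤ (m - i).factorial * m ^ (m + i)) :
    (m + (i + 1)).factorial * m ^ (m - (i + 1)) ≤
      (m - (i + 1)).factorial * m ^ (m + (i + 1)) := by
  by_cases hcase : i * (i + 1) < m
  · -- the increasing regime: contradiction with h
    exfalso
    have hprev : (i - 1) * i ≤ m := by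
      have : (i - 1) * i ≤ i * (i + 1) := Nat.mul_le_mul (by omega) (by omega)
      omega
    have hQ : (m - i).factorial * m ^ (2 * i) < (m + i).factorial :=
      natQ m (by omega) i hi1 hprev
    have hpow : m ^ (m + i) = m ^ (2 * i) * m ^ (m - i) := by
      rw [← pow_add]; congr 1; omega
    have hcontra : (m - i).factorial * m ^ (m + i) < (m + i).factorial * m ^ (m - i) := by
      rw [hpow]
      calc (m - i).factorial * (m ^ (2 * i) * m ^ (m - i))
          = (m - i).factorial * m ^ (2 * i) * m ^ (m - i) := by ring
        _ < (m + i).factorial * m ^ (m - i) :=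
            mul_lt_mul_of_pos_right hQ (pow_pos (by omega) _)
    omega
  · -- decreasing regime
    push_neg at hcase
    have hratio : (m + i + 1) * (m - i) ≤ m * m := by
      zify [show i ≤ m by omega]
      nlinarith
    set a := (m + i).factorial with ha
    set b := (m - (i + 1)).factorial with hb
    set p := m ^ (m - (i + 1)) with hp
    set q := m ^ (m + i) with hq
    have hfacadd : (m + (i + 1)).factorial = (m + i + 1) * a := by
      rw [ha, show m + (i + 1) = (m + i) + 1 by ring, Nat.factorial_succ]
    have hfacsub : (m - i).factorial = (m - i) * b := by
      rw [hb, show m - i = (m - (i + 1)) + 1 by omega]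
      exact Nat.factorial_succ _
    have hpow1 : m ^ (m - i) = p * m := by
      rw [show m - i = (m - (i + 1)) + 1 by omega, pow_succ, hp]
    have hpow2 : m ^ (m + (i + 1)) = q * m := by
      rw [show m + (i + 1) = (m + i) + 1 by ring, pow_succ, hq]
    rw [hfacadd, hpow2]
    rw [hfacsub, hpow1] at h
    -- goal : (m + i + 1) * a * p ≤ b * (q * m)
    have key : ((m + i + 1) * a * p) * (m * (m - i)) ≤ (b * (q * m)) * (m * (m - i)) := by
      calc ((m + i + 1) * a * p) * (m * (m - i))
          = ((m + i + 1) * (m - i)) * (a * (p * m)) := by ring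
        _ ≤ (m * m) * ((m - i) * b * q) := Nat.mul_le_mul hratio h
        _ = (b * (q * m)) * (m * (m - i)) := by ring
    exact Nat.le_of_mul_le_mul_right key (Nat.mul_pos (by omega) (by omega))

/-- Sign translation to natural numbers. -/
private lemma sign_le (m : ℕ) (hm : 1 ≤ m) (n₁ n₂ : ℕ) :
    poissonPMFReal (m : ℝ≥0) n₁ - poissonPMFReal (m : ℝ≥0) n₂ ≤ 0 ↔
      (n₂.factorial * m ^ n₁ : ℕ) ≤ (n₁.factorial * m ^ n₂ : ℕ) := by
  have hmR : ((m : ℝ≥0) : ℝ) = (m : ℝ) := by norm_num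
  rw [sub_nonpos]
  unfold poissonPMFReal
  rw [hmR]
  have hexp : (0 : ℝ) < Real.exp (-(m : ℝ)) := Real.exp_pos _
  have hf1 : (0 : ℝ) < (n₁.factorial : ℝ) := by positivity
  have hf2 : (0 : ℝ) < (n₂.factorial : ℝ) := by positivity
  rw [div_le_div_iff₀ hf1 hf2, ← Nat.cast_le (α := ℝ)]
  push_cast
  rw [mul_assoc, mul_assoc, mul_le_mul_iff_right₀ hexp]
  constructor <;> intro h <;> nlinarith [h]

theorem stmt13 (m : ℕ) (hm : 3 ≤ m) :
    ∃ k : ℕ,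
      (∀ i ∈ Finset.Icc 1 m, i ≤ k →
        0 < poissonPMFReal (m : ℝ≥0) (m - i) - poissonPMFReal (m : ℝ≥0) (m + i)) ∧
      (∀ i ∈ Finset.Icc 1 m, k < i →
        poissonPMFReal (m : ℝ≥0) (m - i) - poissonPMFReal (m : ℝ≥0) (m + i) ≤ 0) := by
  set a : ℕ → ℝ := fun i =>
    poissonPMFReal (m : ℝ≥0) (m - i) - poissonPMFReal (m : ℝ≥0) (m + i) with ha
  have hm1 : 1 ≤ m := by omega
  have htrans : ∀ i, a i ≤ 0 ↔
      (m + i).factorial * m ^ (m - i) ≤ (m - i).factorial * m ^ (m + i) := by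
    intro i
    exact sign_le m hm1 (m - i) (m + i)
  -- downward closure for a
  have hdc : ∀ j, 1 ≤ j → j + 1 ≤ m → a j ≤ 0 → a (j + 1) ≤ 0 := by
    intro j hj1 hjm hle
    rw [htrans] at hle ⊢
    exact natStep m j hm hj1 hjm hle
  by_cases hex : ∃ i, (i ∈ Finset.Icc 1 m ∧ a i ≤ 0)
  · classical
    obtain ⟨hi0mem, hi0le⟩ := Nat.find_spec hex
    set i0 := Nat.find hex with hi0
    have hi01 : 1 ≤ i0 := (Finset.mem_Icc.mp hi0mem).1
    have hi0m : i0 ≤ m := (Finset.mem_Icc.mp hi0mem).2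
    have main : ∀ j, i0 ≤ j → j ≤ m → a j ≤ 0 := by
      intro j
      induction j with
      | zero => omega
      | succ l ih =>
        intro hl1 hl2
        rcases Nat.lt_or_ge l i0 with hj | hj
        · have heq : l + 1 = i0 := by omega
          rwa [heq]
        · exact hdc l (by omega) hl2 (ih hj (by omega))
    refine ⟨i0 - 1, ?_, ?_⟩
    · intro i hi hik
      have hii0 : i < i0 := by omega
      have hmin := Nat.find_min hex hii0
      push_neg at hmin
      exact hmin hi
    · intro i hi hki
      exact main i (by omega) (Finset.mem_Icc.mp hi).2
  · push_neg at hex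
    refine ⟨m, ?_, ?_⟩
    · intro i hi _
      exact hex i hi
    · intro i hi hki
      exact absurd (Finset.mem_Icc.mp hi).2 (by omega)
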